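/- (Theorem 1 of the paper.) Let θ : ZMod n → ℝ be the occupied angles of the pursuers, with θ i > 0 for all i and 2π − ∑ᵢ θ i ≤ 0. Let ε : ℝ → (ZMod n → ℝ) be differentiable with ε'(t) = −(M *ᵥ ε(t)) for every t and with ∑ᵢ εᵢ(0) = 2π − ∑ᵢ θ i. Then the group occupied angle θ_G(t) = ∑ᵢ θ i + ∑ᵢ min(εᵢ(t), 0) tends to 2π as t → ∞; i.e., the encirclement algorithm traps the evader in the union of the pursuers' capture domains. -/

import Mathlib

open Matrix Filter Real

/-- The weighted cycle Laplacian matrix of the encirclement algorithm: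
`M i i = k i + k (i+1)`, `M i (i-1) = -k i`, `M i (i+1) = -k (i+1)`, and `0` otherwise. -/
def cycLap (n : ℕ) (k : ZMod n → ℝ) : Matrix (ZMod n) (ZMod n) ℝ :=
  Matrix.of fun i j =>
    if j = i then k i + k (i + 1)
    else if j = i - 1 then -k i
    else if j = i + 1 then -k (i + 1)
    else 0

section helpers
variable {n : ℕ}

lemma zmod_two_ne (hn : 3 ≤ n) : (2 : ZMod n) ≠ 0 := by
  intro h
  rw [show (2 : ZMod n) = ((2:ℕ) : ZMod n) by push_cast; ring,
    ZMod.natCast_eq_zero_iff] at h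
  exact absurd (Nat.le_of_dvd two_pos h) (by omega)

lemma zmod_one_ne (hn : 3 ≤ n) : (1 : ZMod n) ≠ 0 := by
  intro h
  rw [show (1 : ZMod n) = ((1:ℕ) : ZMod n) by push_cast; ring,
    ZMod.natCast_eq_zero_iff] at h
  exact absurd (Nat.le_of_dvd one_pos h) (by omega)

lemma mulVec_cycLap [NeZero n] (hn : 3 ≤ n) (k x : ZMod n → ℝ) (i : ZMod n) :
    (cycLap n k *ᵥ x) i
      = (k i + k (i+1)) * x i - k i * x (i-1) - k (i+1) * x (i+1) := by
  have h1 : (i - 1 : ZMod n) ≠ i := fun h => zmod_one_ne hn (by linear_combination -h)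
  have h2 : (i + 1 : ZMod n) ≠ i := fun h => zmod_one_ne hn (by linear_combination h)
  have h3 : (i - 1 : ZMod n) ≠ i + 1 := fun h => zmod_two_ne hn (by linear_combination -h)
  have key : ∀ j, cycLap n k i j * x j =
      (if i = j then (k i + k (i+1)) * x i else 0)
      + (if i - 1 = j then -(k i * x (i-1)) else 0)
      + (if i + 1 = j then -(k (i+1) * x (i+1)) else 0) := by
    intro j
    simp only [cycLap, Matrix.of_apply]
    rcases eq_or_ne j i with rfl | hj
    · simp [h1.symm, h2.symm, zmod_one_ne hn, zmod_two_ne hn]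
    · rcases eq_or_ne j (i - 1) with rfl | hj1
      · simp [hj, h1, h3, h3.symm, Ne.symm hj, zmod_one_ne hn, zmod_two_ne hn]
      · rcases eq_or_ne j (i + 1) with rfl | hj2
        · simp [hj, hj1, Ne.symm hj, h3.symm, Ne.symm hj1, zmod_one_ne hn, zmod_two_ne hn]
        · simp [hj, hj1, hj2, Ne.symm hj, Ne.symm hj1, Ne.symm hj2]
  simp only [Matrix.mulVec, dotProduct]
  simp only [key, Finset.sum_add_distrib, Finset.sum_ite_eq, Finset.mem_univ, if_true]
  ring

variable [NeZero n]

lemma shift_sum (g : ZMod n → ℝ) : ∑ i : ZMod n, g (i + 1) = ∑ i : ZMod n, g i :=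
  Fintype.sum_equiv (Equiv.addRight 1) _ _ (fun i => by simp)

lemma shift_sum' (k x : ZMod n → ℝ) :
    ∑ i, k i * (x i * x (i-1)) = ∑ i, k (i+1) * (x (i+1) * x i) := by
  rw [← shift_sum (fun i => k i * (x i * x (i-1)))]
  exact Finset.sum_congr rfl fun i _ => by rw [add_sub_cancel_right]

lemma shift_sum'' (k x : ZMod n → ℝ) :
    ∑ i, k i * x (i-1) = ∑ i, k (i+1) * x i := by
  rw [← shift_sum (fun i => k i * x (i-1))]
  exact Finset.sum_congr rfl fun i _ => by rw [add_sub_cancel_right]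

lemma quad_eq (hn : 3 ≤ n) (k x : ZMod n → ℝ) :
    ∑ i, x i * (cycLap n k *ᵥ x) i = ∑ i, k (i+1) * (x (i+1) - x i)^2 := by
  have lhs : ∑ i, x i * (cycLap n k *ᵥ x) i
      = (∑ i, (k i * x i^2 + k (i+1) * x i^2 - k (i+1) * (x (i+1) * x i)))
        - ∑ i, k i * (x i * x (i-1)) := by
    rw [← Finset.sum_sub_distrib]
    refine Finset.sum_congr rfl fun i _ => by rw [mulVec_cycLap hn]; ring
  rw [lhs, shift_sum' k x, ← Finset.sum_sub_distrib]
  have rhs : ∑ i, k (i+1) * (x (i+1) - x i)^2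
      = ∑ i, (k (i+1) * x (i+1)^2)
        + ∑ i, (k (i+1) * x i^2 - 2 * (k (i+1) * (x (i+1) * x i))) := by
    rw [← Finset.sum_add_distrib]
    exact Finset.sum_congr rfl fun i _ => by ring
  rw [rhs, shift_sum (fun i => k i * x i ^ 2), ← Finset.sum_add_distrib]
  exact Finset.sum_congr rfl fun i _ => by ring

lemma colsum_zero (hn : 3 ≤ n) (k x : ZMod n → ℝ) :
    ∑ i, (cycLap n k *ᵥ x) i = 0 := by
  have : ∑ i, (cycLap n k *ᵥ x) i
      = (∑ i, ((k i + k (i+1)) * x i - k (i+1) * x (i+1))) - ∑ i, k i * x (i-1) := by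
    rw [← Finset.sum_sub_distrib]
    refine Finset.sum_congr rfl fun i _ => by rw [mulVec_cycLap hn]; ring
  rw [this, shift_sum'' k x,
    show (∑ i, ((k i + k (i+1)) * x i - k (i+1) * x (i+1)))
      = ∑ i, ((k i + k (i+1)) * x i) - ∑ i, k (i+1) * x (i+1) from Finset.sum_sub_distrib _ _,
    shift_sum (fun i => k i * x i), ← Finset.sum_sub_distrib, ← Finset.sum_sub_distrib]
  rw [show (0:ℝ) = ∑ i : ZMod n, 0 by simp]
  exact Finset.sum_congr rfl fun i _ => by ring

lemma mulVec_const (hn : 3 ≤ n) (k : ZMod n → ℝ) (c : ℝ) (i : ZMod n) :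
    (cycLap n k *ᵥ fun _ => c) i = 0 := by
  rw [mulVec_cycLap hn]; ring

lemma const_of_step (x : ZMod n → ℝ) (h : ∀ i, x (i+1) = x i) : ∀ i, x i = x 0 := by
  have key : ∀ m : ℕ, x (m : ZMod n) = x 0 := by
    intro m; induction m with
    | zero => simp
    | succ m ih => rw [show ((m+1 : ℕ) : ZMod n) = (m : ZMod n) + 1 by push_cast; ring, h, ih]
  intro i
  obtain ⟨m, rfl⟩ := ZMod.natCast_rightInverse.surjective i
  exact key m
end helpers

section gap
variable {n : ℕ} [NeZero n]


lemma sq_sum_nonneg (x : ZMod n → ℝ) : 0 ≤ ∑ i, (x i)^2 :=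
  Finset.sum_nonneg fun i _ => sq_nonneg _

lemma Qcont (k : ZMod n → ℝ) :
    Continuous (fun x : ZMod n → ℝ => ∑ i, k (i+1) * (x (i+1) - x i)^2) := by
  refine continuous_finset_sum _ fun i _ => Continuous.mul continuous_const ?_
  exact ((continuous_apply (i+1)).sub (continuous_apply i)).pow 2

lemma const_of_step' (x : ZMod n → ℝ) (h : ∀ i, x (i+1) = x i) : ∀ i, x i = x 0 := by
  have key : ∀ m : ℕ, x (m : ZMod n) = x 0 := by
    intro m; induction m with
    | zero => simp
    | succ m ih => rw [show ((m+1 : ℕ) : ZMod n) = (m : ZMod n) + 1 by push_cast; ring, h, ih]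
  intro i
  obtain ⟨m, rfl⟩ := ZMod.natCast_rightInverse.surjective i
  exact key m

lemma Qpos (hn : 3 ≤ n) (k : ZMod n → ℝ) (hk : ∀ i, 0 < k i) (x : ZMod n → ℝ)
    (hs : ∑ i, x i = 0) (hsq : ∑ i, (x i)^2 = 1) :
    0 < ∑ i, k (i+1) * (x (i+1) - x i)^2 := by
  have hnn : ∀ i ∈ Finset.univ, (0:ℝ) ≤ k (i+1) * (x (i+1) - x i)^2 :=
    fun i _ => mul_nonneg (hk _).le (sq_nonneg _)
  rcases (Finset.sum_nonneg hnn).lt_or_eq with h | h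
  · exact h
  · exfalso
    have hz : ∀ i, x (i+1) = x i := by
      intro i
      have := (Finset.sum_eq_zero_iff_of_nonneg hnn).mp h.symm i (Finset.mem_univ i)
      have h2 : (x (i+1) - x i)^2 = 0 := by
        rcases mul_eq_zero.mp this with h' | h'
        · exact absurd h' (hk _).ne'
        · exact h'
      have := pow_eq_zero_iff (n := 2) (by norm_num) |>.mp h2
      linarith [sub_eq_zero.mp this]
    have hconst := const_of_step' x hz
    have : ∑ i, x i = (n : ℝ) * x 0 := by
      rw [Finset.sum_congr rfl fun i _ => hconst i]
      simp [Finset.card_univ, ZMod.card, mul_comm]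
    rw [hs] at this
    have hx0 : x 0 = 0 := by
      have hn0 : (n:ℝ) ≠ 0 := Nat.cast_ne_zero.mpr (NeZero.ne n)
      rcases mul_eq_zero.mp this.symm with h' | h'
      · exact absurd h' hn0
      · exact h'
    have : ∑ i, (x i)^2 = 0 := by
      refine Finset.sum_eq_zero fun i _ => by rw [hconst i, hx0]; ring
    rw [hsq] at this; norm_num at this

lemma spectral_gap (hn : 3 ≤ n) (k : ZMod n → ℝ) (hk : ∀ i, 0 < k i) :
    ∃ c > 0, ∀ x : ZMod n → ℝ, ∑ i, x i = 0 →
      c * ∑ i, (x i)^2 ≤ ∑ i, k (i+1) * (x (i+1) - x i)^2 := by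
  set Q : (ZMod n → ℝ) → ℝ := fun x => ∑ i, k (i+1) * (x (i+1) - x i)^2 with hQ
  set C : Set (ZMod n → ℝ) := {x | ∑ i, x i = 0 ∧ ∑ i, (x i)^2 = 1} with hC
  have hclosed : IsClosed C := by
    apply IsClosed.inter
    · exact isClosed_eq (continuous_finset_sum _ fun i _ => continuous_apply i) continuous_const
    · exact isClosed_eq (continuous_finset_sum _ fun i _ => (continuous_apply i).pow 2)
        continuous_const
  have hbdd : Bornology.IsBounded C := by
    apply Bornology.IsBounded.subset (Metric.isBounded_closedBall (x := (0 : ZMod n → ℝ)) (r := 1))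
    intro x hx
    rw [Metric.mem_closedBall, dist_zero_right]
    rw [pi_norm_le_iff_of_nonneg zero_le_one]
    intro i
    rw [Real.norm_eq_abs, ← sq_le_one_iff_abs_le_one]
    calc (x i)^2 ≤ ∑ j, (x j)^2 :=
          Finset.single_le_sum (f := fun j => (x j)^2) (fun j _ => sq_nonneg _)
            (Finset.mem_univ i)
      _ = 1 := hx.2
  have hcpt : IsCompact C := Metric.isCompact_of_isClosed_isBounded hclosed hbdd
  have hne : C.Nonempty := by
    set a : ℝ := Real.sqrt (1/2) with ha
    have ha2 : a^2 = 1/2 := Real.sq_sqrt (by norm_num)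
    have h10 : (1 : ZMod n) ≠ 0 := by
      intro h
      rw [show (1 : ZMod n) = ((1:ℕ) : ZMod n) by push_cast; ring,
        ZMod.natCast_eq_zero_iff] at h
      exact absurd (Nat.le_of_dvd one_pos h) (by omega)
    refine ⟨fun j => (if (0:ZMod n) = j then a else 0) + (if (1:ZMod n) = j then -a else 0), ?_, ?_⟩
    · simp [Finset.sum_add_distrib, Finset.sum_ite_eq]
    · have : ∀ j : ZMod n,
          ((if (0:ZMod n) = j then a else 0) + (if (1:ZMod n) = j then -a else 0))^2
          = (if (0:ZMod n) = j then a^2 else 0) + (if (1:ZMod n) = j then a^2 else 0) := by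
        intro j
        rcases eq_or_ne (0 : ZMod n) j with rfl | hj
        · simp [h10]
        · rcases eq_or_ne (1 : ZMod n) j with rfl | hj1
          · simp [hj]
          · simp [hj, hj1]
      simp only [this, Finset.sum_add_distrib, Finset.sum_ite_eq, Finset.mem_univ, if_true]
      rw [ha2]; norm_num
  obtain ⟨x₀, hx₀C, hx₀min'⟩ := hcpt.exists_isMinOn hne (Qcont k).continuousOn
  have hx₀min := isMinOn_iff.mp hx₀min'
  refine ⟨Q x₀, Qpos hn k hk x₀ hx₀C.1 hx₀C.2, fun x hx => ?_⟩
  rcases (sq_sum_nonneg x).lt_or_eq with hs | hs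
  · set r : ℝ := Real.sqrt (∑ i, (x i)^2) with hr
    have hrpos : 0 < r := Real.sqrt_pos.mpr hs
    have hr2 : r^2 = ∑ i, (x i)^2 := Real.sq_sqrt hs.le
    set z : ZMod n → ℝ := fun i => x i / r with hz
    have hzC : z ∈ C := by
      constructor
      · simp only [hz, ← Finset.sum_div, hx, zero_div]
      · have : ∀ i, (z i)^2 = (x i)^2 / r^2 := fun i => by rw [hz]; ring
        simp only [this, ← Finset.sum_div, hr2]
        exact div_self hs.ne'
    have hQz : Q z = Q x / r^2 := by
      simp only [hQ, hz]
      rw [Finset.sum_div]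
      refine Finset.sum_congr rfl fun i _ => ?_
      field_simp
    have h1 : Q x₀ ≤ Q z := hx₀min z hzC
    rw [hQz, le_div_iff₀ (by positivity : (0:ℝ) < r^2), hr2] at h1
    exact h1
  · rw [← hs, mul_zero]
    exact Finset.sum_nonneg fun i _ => mul_nonneg (hk _).le (sq_nonneg _)
end gap

/-- Theorem 1 of the paper: if the occupied angles satisfy `2π - ∑ θ i ≤ 0` and the coverage
angles evolve by the encirclement algorithm `ε̇ = -Mε` with `∑ ε i (0) = 2π - ∑ θ i`, then the
group occupied angle `θ_G(t) = ∑ θ i + ∑ min (ε i (t)) 0` tends to `2π`: the encirclement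
algorithm traps the evader in the union of the pursuers' capture domains. -/
theorem encirclement_traps_evader (n : ℕ) (hn : 3 ≤ n) [NeZero n]
    (k : ZMod n → ℝ) (hk : ∀ i, 0 < k i)
    (θ : ZMod n → ℝ) (hθ : ∀ i, 0 < θ i) (hθsum : 2 * π - ∑ i, θ i ≤ 0)
    (ε : ℝ → ZMod n → ℝ) (hε : ∀ t, HasDerivAt ε (-(cycLap n k *ᵥ ε t)) t)
    (hε0 : ∑ i, ε 0 i = 2 * π - ∑ i, θ i) :
    Tendsto (fun t => ∑ i, θ i + ∑ i, min (ε t i) 0) atTop (nhds (2 * π)) := by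
  have hnR : (0:ℝ) < (n:ℝ) := Nat.cast_pos.mpr (Nat.pos_of_ne_zero (NeZero.ne n))
  -- componentwise derivative
  have hεi : ∀ (t : ℝ) (i : ZMod n),
      HasDerivAt (fun s => ε s i) (-((cycLap n k *ᵥ ε t) i)) t := by
    intro t i
    simpa using hasDerivAt_pi.mp (hε t) i
  -- sum conservation
  set S : ℝ → ℝ := fun t => ∑ i, ε t i with hSdef
  have hS : ∀ t, HasDerivAt S 0 t := by
    intro t
    have h1 : HasDerivAt S (∑ i, -((cycLap n k *ᵥ ε t) i)) t :=
      HasDerivAt.fun_sum fun i _ => hεi t i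
    have h2 : (∑ i, -((cycLap n k *ᵥ ε t) i)) = 0 := by
      rw [Finset.sum_neg_distrib, colsum_zero hn, neg_zero]
    rwa [h2] at h1
  have hScst : ∀ t, ∑ i, ε t i = 2 * π - ∑ i, θ i := by
    intro t
    have h := is_const_of_deriv_eq_zero (fun s => (hS s).differentiableAt)
      (fun s => (hS s).deriv) t 0
    simp only [hSdef] at h
    rw [h]
    exact hε0
  set m : ℝ := (2 * π - ∑ i, θ i) / n with hm
  have hm0 : m ≤ 0 := div_nonpos_of_nonpos_of_nonneg hθsum hnR.le
  have hnm : (n:ℝ) * m = 2 * π - ∑ i, θ i := by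
    rw [hm, mul_div_cancel₀ _ hnR.ne']
  have hsum_y : ∀ t, ∑ i, (ε t i - m) = 0 := by
    intro t
    rw [Finset.sum_sub_distrib, Finset.sum_const, Finset.card_univ, ZMod.card,
      nsmul_eq_mul, hnm, hScst t]
    ring
  obtain ⟨c, hc, hgap⟩ := spectral_gap hn k hk
  set f : ℝ → ℝ := fun t => ∑ i, (ε t i - m)^2 with hfdef
  have hf : ∀ t, HasDerivAt f
      (-2 * ∑ i, ((ε t i - m) * ((cycLap n k *ᵥ fun j => ε t j - m) i))) t := by
    intro t
    have h1 : HasDerivAt f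
        (∑ i, ((2:ℕ) * (ε t i - m)^(2-1) * (-((cycLap n k *ᵥ ε t) i)))) t :=
      HasDerivAt.fun_sum fun i _ => ((hεi t i).sub_const m).pow 2
    have h2 : (∑ i, ((2:ℕ) * (ε t i - m)^(2-1) * (-((cycLap n k *ᵥ ε t) i))))
        = -2 * ∑ i, ((ε t i - m) * ((cycLap n k *ᵥ fun j => ε t j - m) i)) := by
      rw [Finset.mul_sum]
      refine Finset.sum_congr rfl fun i _ => ?_
      have hMeq : (cycLap n k *ᵥ fun j => ε t j - m) i = (cycLap n k *ᵥ ε t) i := by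
        rw [mulVec_cycLap hn, mulVec_cycLap hn]; ring
      rw [hMeq]
      push_cast
      ring
    rwa [h2] at h1
  have hf2 : ∀ t, HasDerivAt f
      (-2 * ∑ i, k (i+1) * ((ε t (i+1) - m) - (ε t i - m))^2) t := by
    intro t
    have := hf t
    rwa [quad_eq hn k (fun j => ε t j - m)] at this
  have hfnonneg : ∀ t, 0 ≤ f t := fun t => Finset.sum_nonneg fun i _ => sq_nonneg _
  have hderiv_le : ∀ t, (-2 * ∑ i, k (i+1) * ((ε t (i+1) - m) - (ε t i - m))^2)
      ≤ -2 * c * f t := by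
    intro t
    have := hgap (fun j => ε t j - m) (hsum_y t)
    nlinarith [this]
  -- the Lyapunov function g
  set g : ℝ → ℝ := fun t => f t * Real.exp (2 * c * t) with hgdef
  have hg : ∀ t, HasDerivAt g
      ((-2 * ∑ i, k (i+1) * ((ε t (i+1) - m) - (ε t i - m))^2) * Real.exp (2 * c * t)
        + f t * (Real.exp (2 * c * t) * (2 * c))) t := by
    intro t
    have hexp : HasDerivAt (fun s : ℝ => Real.exp (2 * c * s))
        (Real.exp (2 * c * t) * (2 * c)) t := by
      simpa using ((hasDerivAt_id t).const_mul (2 * c)).exp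
    exact (hf2 t).mul hexp
  have hganti : Antitone g := by
    apply antitone_of_deriv_nonpos (fun t => (hg t).differentiableAt)
    intro t
    rw [(hg t).deriv]
    have h1 := hderiv_le t
    have h2 : (0:ℝ) < Real.exp (2 * c * t) := Real.exp_pos _
    nlinarith [hfnonneg t]
  have hbound : ∀ t : ℝ, 0 ≤ t → f t ≤ f 0 * Real.exp (-(2 * c * t)) := by
    intro t ht
    have h1 : g t ≤ g 0 := hganti ht
    have h2 : g 0 = f 0 := by simp [hgdef]
    have h3 : (0:ℝ) < Real.exp (2 * c * t) := Real.exp_pos _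
    rw [h2] at h1
    calc f t = (f t * Real.exp (2 * c * t)) * Real.exp (-(2 * c * t)) := by
          rw [mul_assoc, ← Real.exp_add]; simp
      _ ≤ f 0 * Real.exp (-(2 * c * t)) :=
          mul_le_mul_of_nonneg_right h1 (Real.exp_nonneg _)
  have hfto0 : Tendsto f atTop (nhds 0) := by
    have hexp0 : Tendsto (fun t : ℝ => Real.exp (-(2 * c * t))) atTop (nhds 0) := by
      apply Real.tendsto_exp_atBot.comp
      rw [tendsto_neg_atBot_iff]
      exact Tendsto.const_mul_atTop (by positivity) tendsto_id
    have hlim := hexp0.const_mul (f 0)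
    rw [mul_zero] at hlim
    exact squeeze_zero' (Eventually.of_forall hfnonneg)
      ((eventually_ge_atTop 0).mono fun t ht => hbound t ht) hlim
  have hcomp : ∀ i, Tendsto (fun t => ε t i) atTop (nhds m) := by
    intro i
    have h2 : Tendsto (fun t => (ε t i - m)^2) atTop (nhds 0) := by
      apply squeeze_zero' (Eventually.of_forall fun t => sq_nonneg _)
        (Eventually.of_forall fun t => ?_) hfto0
      exact Finset.single_le_sum (f := fun j => (ε t j - m)^2)
        (fun j _ => sq_nonneg _) (Finset.mem_univ i)
    have h3 : Tendsto (fun t => |ε t i - m|) atTop (nhds 0) := by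
      have := (Real.continuous_sqrt.tendsto 0).comp h2
      simp only [Function.comp_def, Real.sqrt_sq_eq_abs, Real.sqrt_zero] at this
      exact this
    have h4 : Tendsto (fun t => ε t i - m) atTop (nhds 0) := by
      rw [tendsto_zero_iff_abs_tendsto_zero]
      exact h3
    have := h4.add_const m
    simpa using this
  have hmins : Tendsto (fun t => ∑ i, min (ε t i) 0) atTop (nhds (2 * π - ∑ i, θ i)) := by
    have h1 : ∀ i : ZMod n, Tendsto (fun t => min (ε t i) 0) atTop (nhds m) := by
      intro i
      have := (hcomp i).min (tendsto_const_nhds (x := (0:ℝ)))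
      rwa [min_eq_left hm0] at this
    have h2 := tendsto_finset_sum (f := fun i t => min (ε t i) 0) Finset.univ
      (fun i _ => h1 i)
    rw [Finset.sum_const, Finset.card_univ, ZMod.card, nsmul_eq_mul, hnm] at h2
    exact h2
  have hfinal := Tendsto.add
    (tendsto_const_nhds : Tendsto (fun _ : ℝ => ∑ i, θ i) atTop (nhds (∑ i, θ i))) hmins
  rw [show (∑ i, θ i) + (2 * π - ∑ i, θ i) = 2 * π by ring] at hfinal
  exact hfinal
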